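/- Let X₁, X₂, … be i.i.d. χ²₁ random variables and let T_d = d² · min{X₁,…,X_d}. Then T_d converges in distribution as d → ∞ to the distribution with density f(x) = (1/√(2πx)) exp(−√(2x/π)) for x > 0, equivalently with CDF G(x) = 1 − exp(−√(2x/π)). -/

import Mathlib

open MeasureTheory ProbabilityTheory Filter Real
open scoped NNReal

/-- The chi-square distribution with one degree of freedom. -/
noncomputable def chiSqOne : Measure ℝ :=
  Measure.map (fun z : ℝ => z ^ 2) (gaussianReal 0 1)

instance : IsProbabilityMeasure chiSqOne :=
  Measure.isProbabilityMeasure_map ((by fun_prop : Measurable fun z : ℝ => z ^ 2).aemeasurable)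

lemma chiSq_Iic (t : ℝ) (ht : 0 ≤ t) :
    chiSqOne (Set.Iic t)
      = ENNReal.ofReal (∫ z in Set.Icc (-Real.sqrt t) (Real.sqrt t), gaussianPDFReal 0 1 z) := by
  rw [chiSqOne, Measure.map_apply (by fun_prop : Measurable fun z : ℝ => z ^ 2) measurableSet_Iic]
  have hpre : (fun z : ℝ => z ^ 2) ⁻¹' Set.Iic t = Set.Icc (-Real.sqrt t) (Real.sqrt t) := by
    ext z
    simp only [Set.mem_preimage, Set.mem_Iic, Set.mem_Icc]
    constructor
    · intro h
      have := Real.sqrt_le_sqrt h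
      rw [Real.sqrt_sq_eq_abs] at this
      exact abs_le.mp this
    · intro ⟨h1, h2⟩
      have : |z| ≤ Real.sqrt t := abs_le.mpr ⟨h1, h2⟩
      calc z ^ 2 = |z| ^ 2 := (sq_abs z).symm
        _ ≤ Real.sqrt t ^ 2 := pow_le_pow_left₀ (abs_nonneg z) this 2
        _ = t := Real.sq_sqrt ht
  rw [hpre, gaussianReal_apply_eq_integral _ one_ne_zero]

lemma gpdf_anti {z w : ℝ} (h : w ^ 2 ≤ z ^ 2) :
    gaussianPDFReal 0 1 z ≤ gaussianPDFReal 0 1 w := by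
  unfold gaussianPDFReal
  have h2 : Real.exp (-(z - 0) ^ 2 / (2 * (1 : ℝ≥0))) ≤ Real.exp (-(w - 0) ^ 2 / (2 * (1 : ℝ≥0))) := by
    apply Real.exp_le_exp.mpr
    simp only [sub_zero, NNReal.coe_one, mul_one]
    linarith
  exact mul_le_mul_of_nonneg_left h2 (by positivity)

lemma integral_le_upper (u : ℝ) (hu : 0 ≤ u) :
    ∫ z in Set.Icc (-u) u, gaussianPDFReal 0 1 z ≤ 2 * u * gaussianPDFReal 0 1 0 := by
  have h1 : ∫ z in Set.Icc (-u) u, gaussianPDFReal 0 1 z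
      ≤ ∫ _ in Set.Icc (-u) u, gaussianPDFReal 0 1 0 := by
    apply setIntegral_mono_on ((integrable_gaussianPDFReal 0 1).restrict)
      (integrableOn_const measure_Icc_lt_top.ne) measurableSet_Icc
    intro z hz
    exact gpdf_anti (by simpa using sq_nonneg z)
  calc _ ≤ _ := h1
    _ = 2 * u * gaussianPDFReal 0 1 0 := by
        rw [setIntegral_const, measureReal_def, Real.volume_Icc]
        rw [smul_eq_mul, ENNReal.toReal_ofReal (by linarith)]
        ring

lemma lower_le_integral (u : ℝ) (hu : 0 ≤ u) :
    2 * u * gaussianPDFReal 0 1 u ≤ ∫ z in Set.Icc (-u) u, gaussianPDFReal 0 1 z := by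
  have h1 : ∫ _ in Set.Icc (-u) u, gaussianPDFReal 0 1 u
      ≤ ∫ z in Set.Icc (-u) u, gaussianPDFReal 0 1 z := by
    apply setIntegral_mono_on (integrableOn_const measure_Icc_lt_top.ne)
      ((integrable_gaussianPDFReal 0 1).restrict) measurableSet_Icc
    intro z hz
    simp only [Set.mem_Icc] at hz
    exact gpdf_anti (sq_le_sq' hz.1 hz.2)
  calc 2 * u * gaussianPDFReal 0 1 u
      = ∫ _ in Set.Icc (-u) u, gaussianPDFReal 0 1 u := by
        rw [setIntegral_const, measureReal_def, Real.volume_Icc]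
        rw [smul_eq_mul, ENNReal.toReal_ofReal (by linarith)]
        ring
    _ ≤ _ := h1

lemma continuous_gpdf : Continuous (gaussianPDFReal 0 1) := by
  rw [gaussianPDFReal_def]; fun_prop

lemma chiSq_toReal_eq (x : ℝ) (hx : 0 < x) {d : ℕ} (hd : 1 ≤ d) :
    (chiSqOne (Set.Iic (x / (d : ℝ) ^ 2))).toReal
      = ∫ z in Set.Icc (-(Real.sqrt x / d)) (Real.sqrt x / d), gaussianPDFReal 0 1 z := by
  have hd0 : (0 : ℝ) < d := by exact_mod_cast hd
  have hs : Real.sqrt (x / (d : ℝ) ^ 2) = Real.sqrt x / d := by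
    rw [Real.sqrt_div hx.le, Real.sqrt_sq hd0.le]
  rw [chiSq_Iic _ (by positivity), hs,
    ENNReal.toReal_ofReal (setIntegral_nonneg measurableSet_Icc
      fun z _ => gaussianPDFReal_nonneg _ _ _)]

lemma key_limit (x : ℝ) (hx : 0 < x) :
    Tendsto (fun d : ℕ => (d : ℝ) * (chiSqOne (Set.Iic (x / (d : ℝ) ^ 2))).toReal) atTop
      (nhds (Real.sqrt (2 * x / π))) := by
  have hφ0 : gaussianPDFReal 0 1 0 = (Real.sqrt (2 * π))⁻¹ := by
    unfold gaussianPDFReal; norm_num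
  have h2π : (0 : ℝ) < 2 * π := by positivity
  have hL : Real.sqrt (2 * x / π) = 2 * Real.sqrt x * gaussianPDFReal 0 1 0 := by
    rw [hφ0, show 2 * x / π = (2 * Real.sqrt x * (Real.sqrt (2 * π))⁻¹) ^ 2 by
      have h1 := Real.sq_sqrt hx.le
      have h2 := Real.sq_sqrt h2π.le
      have h3 : (2 * Real.sqrt x * (Real.sqrt (2 * π))⁻¹) ^ 2
          = 4 * Real.sqrt x ^ 2 * (Real.sqrt (2 * π) ^ 2)⁻¹ := by ring
      rw [h3, h1, h2]
      field_simp
      ring, Real.sqrt_sq (by positivity)]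
  rw [hL]
  have htend0 : Tendsto (fun d : ℕ => Real.sqrt x / (d : ℝ)) atTop (nhds 0) :=
    tendsto_const_div_atTop_nhds_zero_nat _
  have hlow : Tendsto (fun d : ℕ => 2 * Real.sqrt x * gaussianPDFReal 0 1 (Real.sqrt x / d))
      atTop (nhds (2 * Real.sqrt x * gaussianPDFReal 0 1 0)) :=
    (tendsto_const_nhds.mul ((continuous_gpdf.tendsto 0).comp htend0))
  apply tendsto_of_tendsto_of_tendsto_of_le_of_le' hlow tendsto_const_nhds
  · filter_upwards [eventually_ge_atTop 1] with d hd
    have hd0 : (0 : ℝ) < d := by exact_mod_cast hd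
    rw [chiSq_toReal_eq x hx hd]
    have := lower_le_integral (Real.sqrt x / d) (by positivity)
    calc 2 * Real.sqrt x * gaussianPDFReal 0 1 (Real.sqrt x / d)
        = (d : ℝ) * (2 * (Real.sqrt x / d) * gaussianPDFReal 0 1 (Real.sqrt x / d)) := by
          field_simp
      _ ≤ _ := mul_le_mul_of_nonneg_left this hd0.le
  · filter_upwards [eventually_ge_atTop 1] with d hd
    have hd0 : (0 : ℝ) < d := by exact_mod_cast hd
    rw [chiSq_toReal_eq x hx hd]
    have := integral_le_upper (Real.sqrt x / d) (by positivity)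
    calc (d : ℝ) * ∫ z in Set.Icc (-(Real.sqrt x / d)) (Real.sqrt x / d), gaussianPDFReal 0 1 z
        ≤ (d : ℝ) * (2 * (Real.sqrt x / d) * gaussianPDFReal 0 1 0) :=
          mul_le_mul_of_nonneg_left this hd0.le
      _ = 2 * Real.sqrt x * gaussianPDFReal 0 1 0 := by field_simp

lemma pow_tendsto_exp {p : ℕ → ℝ} {L : ℝ}
    (hL : Tendsto (fun d : ℕ => (d : ℝ) * p d) atTop (nhds L))
    (hp : ∀ᶠ d in atTop, 0 < p d) :
    Tendsto (fun d : ℕ => (1 - p d) ^ d) atTop (nhds (Real.exp (-L))) := by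
  have hp0 : Tendsto p atTop (nhds 0) := by
    have h1 : Tendsto (fun d : ℕ => ((d : ℝ))⁻¹ * ((d : ℝ) * p d)) atTop (nhds (0 * L)) :=
      Tendsto.mul (tendsto_inv_atTop_zero.comp tendsto_natCast_atTop_atTop) hL
    rw [zero_mul] at h1
    apply h1.congr'
    filter_upwards [eventually_ge_atTop 1] with d hd
    have hd0 : ((d : ℝ)) ≠ 0 := by positivity
    field_simp
  have hsmall : ∀ᶠ d in atTop, p d < 1 := hp0.eventually_lt_const one_pos
  have hderiv : Tendsto (slope Real.log 1) (nhdsWithin 1 {(1 : ℝ)}ᶜ) (nhds 1) := by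
    have := (Real.hasDerivAt_log one_ne_zero)
    rw [hasDerivAt_iff_tendsto_slope] at this
    simpa using this
  have hy : Tendsto (fun d : ℕ => 1 - p d) atTop (nhdsWithin 1 {(1 : ℝ)}ᶜ) := by
    rw [tendsto_nhdsWithin_iff]
    constructor
    · simpa using tendsto_const_nhds.sub hp0
    · filter_upwards [hp] with d hd
      simp only [Set.mem_compl_iff, Set.mem_singleton_iff]
      intro h
      nlinarith
  have hslope : Tendsto (fun d : ℕ => slope Real.log 1 (1 - p d)) atTop (nhds 1) :=
    hderiv.comp hy
  have hlog : Tendsto (fun d : ℕ => (d : ℝ) * Real.log (1 - p d)) atTop (nhds (-L)) := by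
    have h2 : Tendsto (fun d : ℕ =>
        ((d : ℝ) * p d) * slope Real.log 1 (1 - p d) * (-1)) atTop (nhds (L * 1 * (-1))) :=
      (hL.mul hslope).mul tendsto_const_nhds
    rw [show L * 1 * (-1) = -L by ring] at h2
    apply h2.congr'
    filter_upwards [hp] with d hd
    have hne : p d ≠ 0 := ne_of_gt hd
    rw [slope_def_field, Real.log_one]
    field_simp
    linear_combination (↑d * Real.log (1 - p d)) * mul_inv_cancel₀ hne
  have hfin : Tendsto (fun d : ℕ => Real.exp ((d : ℝ) * Real.log (1 - p d))) atTop
      (nhds (Real.exp (-L))) := (Real.continuous_exp.tendsto _).comp hlog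
  apply hfin.congr'
  filter_upwards [hp, hsmall] with d hd1 hd2
  rw [Real.exp_nat_mul, Real.exp_log (by linarith)]

lemma cdf_eq {Ω : Type*} [MeasurableSpace Ω] {μ : Measure Ω} [IsProbabilityMeasure μ]
    (X : ℕ → Ω → ℝ)
    (hmeas : ∀ i, Measurable (X i))
    (hindep : iIndepFun X μ)
    (hlaw : ∀ i, Measure.map (X i) μ = chiSqOne)
    (x : ℝ) (d : ℕ) (hd : 1 ≤ d) :
    (μ {ω | (d : ℝ) ^ 2 * sInf ((fun i => X i ω) '' Set.Iio d) ≤ x}).toReal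
      = 1 - (1 - (chiSqOne (Set.Iic (x / (d : ℝ) ^ 2))).toReal) ^ d := by
  have hd0 : (0 : ℝ) < d := by exact_mod_cast hd
  have hd2 : (0 : ℝ) < (d : ℝ) ^ 2 := by positivity
  set t : ℝ := x / (d : ℝ) ^ 2 with ht
  have hset : {ω | (d : ℝ) ^ 2 * sInf ((fun i => X i ω) '' Set.Iio d) ≤ x}
      = (⋂ i ∈ Finset.range d, X i ⁻¹' Set.Ioi t)ᶜ := by
    ext ω
    set S := (fun i => X i ω) '' Set.Iio d with hS
    have hS_ne : S.Nonempty := ⟨X 0 ω, ⟨0, by simp; omega, rfl⟩⟩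
    have hS_fin : S.Finite := (Set.finite_Iio d).image _
    simp only [Set.mem_setOf_eq, Set.mem_compl_iff, Set.mem_iInter, Set.mem_preimage,
      Set.mem_Ioi, Finset.mem_range]
    rw [not_forall]
    constructor
    · intro h
      have h1 : sInf S ≤ t := by
        rw [ht, le_div_iff₀ hd2, mul_comm]; exact h
      obtain ⟨i, hi, hXi⟩ := hS_ne.csInf_mem hS_fin
      exact ⟨i, by push_neg; exact ⟨Set.mem_Iio.mp hi, le_of_eq_of_le hXi h1⟩⟩
    · rintro ⟨i, hi⟩
      push_neg at hi
      obtain ⟨hid, hXi⟩ := hi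
      have h1 : sInf S ≤ t :=
        le_trans (csInf_le hS_fin.bddBelow ⟨i, hid, rfl⟩) hXi
      rw [ht, le_div_iff₀ hd2, mul_comm] at h1
      exact h1
  have hmeasI : MeasurableSet (⋂ i ∈ Finset.range d, X i ⁻¹' Set.Ioi t) :=
    MeasurableSet.biInter (Finset.range d).countable_toSet
      fun i _ => (hmeas i) measurableSet_Ioi
  have hprod : μ (⋂ i ∈ Finset.range d, X i ⁻¹' Set.Ioi t)
      = (chiSqOne (Set.Ioi t)) ^ d := by
    rw [hindep.measure_inter_preimage_eq_mul (Finset.range d)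
      (sets := fun _ => Set.Ioi t) (fun i _ => measurableSet_Ioi)]
    have : ∀ i, μ (X i ⁻¹' Set.Ioi t) = chiSqOne (Set.Ioi t) := fun i => by
      rw [← Measure.map_apply (hmeas i) measurableSet_Ioi, hlaw i]
    simp only [this, Finset.prod_const, Finset.card_range]
  have hq : chiSqOne (Set.Ioi t) = 1 - chiSqOne (Set.Iic t) := by
    rw [← Set.compl_Iic, prob_compl_eq_one_sub measurableSet_Iic]
  rw [hset, prob_compl_eq_one_sub hmeasI, hprod, hq,
    ENNReal.toReal_sub_of_le (pow_le_one' (tsub_le_self.trans le_rfl) d) ENNReal.one_ne_top,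
    ENNReal.toReal_one, ENNReal.toReal_pow,
    ENNReal.toReal_sub_of_le prob_le_one ENNReal.one_ne_top, ENNReal.toReal_one]

/-- Let `X₁, X₂, …` be i.i.d. `χ²₁` and `T_d = d² · min{X₁,…,X_d}`. Then `T_d` converges in
distribution to the law with CDF `G(x) = 1 − exp(−√(2x/π))` (density
`(1/√(2πx)) exp(−√(2x/π))` on `x > 0`): the CDFs of `T_d` converge pointwise to `G` at every
continuity point `x > 0`. -/
theorem stmt7 {Ω : Type*} [MeasurableSpace Ω] {μ : Measure Ω} [IsProbabilityMeasure μ]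
    (X : ℕ → Ω → ℝ)
    (hmeas : ∀ i, Measurable (X i))
    (hindep : iIndepFun X μ)
    (hlaw : ∀ i, Measure.map (X i) μ = chiSqOne)
    (x : ℝ) (hx : 0 < x) :
    Tendsto (fun d : ℕ =>
        (μ {ω | (d : ℝ) ^ 2 * sInf ((fun i => X i ω) '' Set.Iio d) ≤ x}).toReal)
      atTop (nhds (1 - Real.exp (-Real.sqrt (2 * x / π)))) := by
  have hpos : ∀ᶠ d : ℕ in atTop, 0 < (chiSqOne (Set.Iic (x / (d : ℝ) ^ 2))).toReal := by
    filter_upwards [eventually_ge_atTop 1] with d hd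
    have hd0 : (0 : ℝ) < d := by exact_mod_cast hd
    rw [chiSq_toReal_eq x hx hd]
    have h1 := lower_le_integral (Real.sqrt x / d) (by positivity)
    have h2 : 0 < 2 * (Real.sqrt x / d) * gaussianPDFReal 0 1 (Real.sqrt x / d) := by
      have := gaussianPDFReal_pos 0 1 (Real.sqrt x / d) one_ne_zero
      positivity
    linarith
  have hpow := pow_tendsto_exp (key_limit x hx) hpos
  have hfinal : Tendsto (fun d : ℕ =>
      1 - (1 - (chiSqOne (Set.Iic (x / (d : ℝ) ^ 2))).toReal) ^ d) atTop
      (nhds (1 - Real.exp (-Real.sqrt (2 * x / π)))) := tendsto_const_nhds.sub hpow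
  apply hfinal.congr'
  filter_upwards [eventually_ge_atTop 1] with d hd
  exact (cdf_eq X hmeas hindep hlaw x d hd).symm
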